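/- Fix an integer $d \geq 2$, set $A = 1 - \frac{1}{2d}$ and $s_n = 2(d-1) n^{\frac{d-2}{d-1}}$. Suppose $(x_n)_{n\geq 1}$ and $(y_n)_{n\geq 1}$ are bounded sequences of nonnegative reals with $x_n \leq \frac{1}{n+s_n} + A x_{n+1}$ and $y_n \leq \frac{2}{(n+s_n)^2} + \frac{2A}{n+s_n} x_{n+1} + A y_{n+1}$ for all $n \geq 1$. Then $y_1 \leq 2 \sum_{n=1}^{\infty} \frac{A^{n-1}}{n+s_n} \sum_{k=1}^{n} \frac{1}{k+s_k}$. -/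
import Mathlib


open Real Filter

theorem stmt6 (d : ℕ) (hd : 2 ≤ d)
    (A : ℝ) (hA : A = 1 - 1 / (2 * (d : ℝ)))
    (s : ℕ → ℝ) (hs : ∀ n : ℕ, s n = 2 * ((d : ℝ) - 1) * (n : ℝ) ^ (((d : ℝ) - 2) / ((d : ℝ) - 1)))
    (x y : ℕ → ℝ) (hxnn : ∀ n, 0 ≤ x n) (hynn : ∀ n, 0 ≤ y n)
    (hxbdd : ∃ B : ℝ, ∀ n, x n ≤ B) (hybdd : ∃ B : ℝ, ∀ n, y n ≤ B)
    (hxrec : ∀ n : ℕ, 1 ≤ n → x n ≤ 1 / ((n : ℝ) + s n) + A * x (n + 1))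
    (hyrec : ∀ n : ℕ, 1 ≤ n →
      y n ≤ 2 / ((n : ℝ) + s n) ^ 2 + (2 * A) / ((n : ℝ) + s n) * x (n + 1) + A * y (n + 1)) :
    y 1 ≤ 2 * ∑' n : ℕ,
        (A ^ n / (((n : ℝ) + 1) + s (n + 1))) *
          ∑ k ∈ Finset.range (n + 1), 1 / (((k : ℝ) + 1) + s (k + 1)) := by
  have hd2 : (2:ℝ) ≤ (d:ℝ) := by exact_mod_cast hd
  have hA0 : 0 < A := by
    rw [hA]
    have h4 : (4:ℝ) ≤ 2 * (d:ℝ) := by linarith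
    have : 1 / (2 * (d:ℝ)) ≤ 1/4 := by
      apply one_div_le_one_div_of_le <;> linarith
    linarith
  have hA1 : A < 1 := by
    rw [hA]
    have : 0 < 1 / (2 * (d:ℝ)) := by positivity
    linarith
  have hsnn : ∀ n, 0 ≤ s n := by
    intro n
    rw [hs]
    have := Real.rpow_nonneg (x := (n:ℝ)) (Nat.cast_nonneg n) (((d : ℝ) - 2) / ((d : ℝ) - 1))
    nlinarith
  -- the basic sequence f
  set f : ℕ → ℝ := fun n => 1 / ((n : ℝ) + 1 + s (n + 1)) with hf
  have hD1 : ∀ n : ℕ, (1:ℝ) ≤ (n:ℝ) + 1 + s (n+1) := by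
    intro n
    have := hsnn (n+1)
    have : (0:ℝ) ≤ (n:ℝ) := Nat.cast_nonneg n
    have := hsnn (n+1)
    linarith
  have hf0 : ∀ n, 0 < f n := by
    intro n; have := hD1 n; simp only [hf]; positivity
  have hf1 : ∀ n, f n ≤ 1 := by
    intro n
    simp only [hf]
    rw [div_le_one (by linarith [hD1 n])]
    linarith [hD1 n]
  -- recursions in terms of f
  have hx' : ∀ n : ℕ, x (n+1) ≤ f n + A * x (n+2) := by
    intro n
    have h := hxrec (n+1) (by omega)
    have hc : ((n+1 : ℕ) : ℝ) = (n:ℝ) + 1 := by push_cast; ring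
    rw [hc] at h
    simpa [hf] using h
  have hy' : ∀ n : ℕ, y (n+1) ≤ 2 * f n ^ 2 + 2 * A * f n * x (n+2) + A * y (n+2) := by
    intro n
    have h := hyrec (n+1) (by omega)
    have hc : ((n+1 : ℕ) : ℝ) = (n:ℝ) + 1 := by push_cast; ring
    rw [hc] at h
    have hDpos : (0:ℝ) < (n:ℝ) + 1 + s (n+1) := by linarith [hD1 n]
    calc y (n+1) ≤ 2 / ((n:ℝ) + 1 + s (n+1)) ^ 2 + (2*A) / ((n:ℝ) + 1 + s (n+1)) * x (n+2)
          + A * y (n+2) := h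
      _ = 2 * f n ^ 2 + 2 * A * f n * x (n+2) + A * y (n+2) := by
          simp only [hf]; field_simp
  -- geometric summability helpers
  have hgeo : Summable (fun j : ℕ => A ^ j) := summable_geometric_of_lt_one hA0.le hA1
  have hsumtail : ∀ n : ℕ, Summable (fun j : ℕ => A ^ j * f (n + j)) := by
    intro n
    apply Summable.of_nonneg_of_le
      (fun j => mul_nonneg (pow_nonneg hA0.le j) (hf0 (n+j)).le) (fun j => ?_) hgeo
    have := hf1 (n + j)
    have := hf0 (n + j)
    nlinarith [pow_nonneg hA0.le j]
  set g : ℕ → ℝ := fun n => ∑' j : ℕ, A ^ j * f (n + j) with hg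
  have hgnn : ∀ n, 0 ≤ g n := fun n => tsum_nonneg (fun j => mul_nonneg (pow_nonneg hA0.le j) (hf0 (n+j)).le)
  have hgle : ∀ n, g n ≤ (1 - A)⁻¹ := by
    intro n
    rw [← tsum_geometric_of_lt_one hA0.le hA1]
    apply Summable.tsum_le_tsum _ (hsumtail n) hgeo
    intro j
    have := hf1 (n + j)
    have := hf0 (n + j)
    nlinarith [pow_nonneg hA0.le j]
  -- g recursion
  have hgrec : ∀ n, g n = f n + A * g (n+1) := by
    intro n
    have h0 := Summable.tsum_eq_zero_add (hsumtail n)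
    simp only [pow_zero, one_mul, Nat.add_zero] at h0
    rw [hg]
    simp only []
    rw [h0]
    congr 1
    rw [← tsum_mul_left]
    congr 1
    funext j
    have : n + (j + 1) = n + 1 + j := by omega
    rw [this]
    ring
  -- x (n+1) ≤ g n
  obtain ⟨B, hB⟩ := hxbdd
  have hB0 : 0 ≤ B := le_trans (hxnn 0) (hB 0)
  have hxg : ∀ n, x (n+1) ≤ g n := by
    intro n
    have key : ∀ N : ℕ, x (n+1) ≤ ∑ j ∈ Finset.range N, A ^ j * f (n + j) + A ^ N * x (n + N + 1) := by
      intro N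
      induction N with
      | zero => simp
      | succ N ih =>
        have h2 := hx' (n + N)
        have hpow : (0:ℝ) ≤ A ^ N := pow_nonneg hA0.le N
        have h3 : A ^ N * x (n + N + 1) ≤ A ^ N * (f (n + N) + A * x (n + N + 2)) := by
          apply mul_le_mul_of_nonneg_left _ hpow
          convert h2 using 3 <;> omega
        rw [Finset.sum_range_succ]
        have : n + (N + 1) + 1 = n + N + 2 := by omega
        rw [this]
        calc x (n+1) ≤ ∑ j ∈ Finset.range N, A ^ j * f (n + j) + A ^ N * x (n + N + 1) := ih
          _ ≤ ∑ j ∈ Finset.range N, A ^ j * f (n + j) + (A ^ N * f (n + N) + A ^ (N+1) * x (n + N + 2)) := by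
              rw [pow_succ]
              nlinarith
          _ = ∑ j ∈ Finset.range N, A ^ j * f (n + j) + A ^ N * f (n + N) + A ^ (N+1) * x (n + N + 2) := by ring
    -- take limits
    have hlim1 : Tendsto (fun N => ∑ j ∈ Finset.range N, A ^ j * f (n + j)) atTop (nhds (g n)) :=
      (hsumtail n).hasSum.tendsto_sum_nat
    have hlim2 : Tendsto (fun N => A ^ N * x (n + N + 1)) atTop (nhds 0) := by
      apply squeeze_zero (fun N => mul_nonneg (pow_nonneg hA0.le N) (hxnn _)) (fun N => ?_)
        (by simpa using (tendsto_pow_atTop_nhds_zero_of_lt_one hA0.le hA1).mul_const B)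
      exact mul_le_mul_of_nonneg_left (hB _) (pow_nonneg hA0.le N)
    have := hlim1.add hlim2
    rw [add_zero] at this
    exact le_of_tendsto_of_tendsto tendsto_const_nhds this
      (Filter.Eventually.of_forall key)
  -- main iteration for y
  obtain ⟨C, hC⟩ := hybdd
  set b : ℕ → ℝ := fun n => A ^ n * (2 * f n * g n) with hb
  have hbnn : ∀ n, 0 ≤ b n := by
    intro n
    exact mul_nonneg (pow_nonneg hA0.le n)
      (mul_nonneg (mul_nonneg two_pos.le (hf0 n).le) (hgnn n))
  have hbsum : Summable b := by
    apply Summable.of_nonneg_of_le hbnn (fun n => ?_) (hgeo.mul_right (2 * (1-A)⁻¹))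
    have h1 := hf1 n
    have h2 := hf0 n
    have h3 := hgle n
    have h4 := hgnn n
    have hpow : (0:ℝ) ≤ A ^ n := pow_nonneg hA0.le n
    have hinv : (0:ℝ) ≤ (1-A)⁻¹ := inv_nonneg.mpr (by linarith)
    simp only [hb]
    nlinarith [mul_le_mul h1 h3 h4 zero_le_one]
  have hcb : ∀ n, 2 * f n ^ 2 + 2 * A * f n * x (n+2) ≤ 2 * f n * g n := by
    intro n
    have h := hxg (n+1)
    have h2 : g n = f n + A * g (n+1) := hgrec n
    have hfn := hf0 n
    have h5 : A * f n * x (n+2) ≤ A * f n * g (n+1) :=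
      mul_le_mul_of_nonneg_left h (mul_nonneg hA0.le hfn.le)
    rw [h2]
    nlinarith [h5]
  have key : ∀ N : ℕ, y 1 ≤ ∑ n ∈ Finset.range N, b n + A ^ N * y (N + 1) := by
    intro N
    induction N with
    | zero => simp
    | succ N ih =>
      have h2 := hy' N
      have hpow : (0:ℝ) ≤ A ^ N := pow_nonneg hA0.le N
      have h3 : A ^ N * y (N + 1) ≤ A ^ N * (2 * f N * g N + A * y (N+2)) := by
        apply mul_le_mul_of_nonneg_left _ hpow
        calc y (N+1) ≤ 2 * f N ^ 2 + 2 * A * f N * x (N+2) + A * y (N+2) := h2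
          _ ≤ 2 * f N * g N + A * y (N+2) := by linarith [hcb N]
      rw [Finset.sum_range_succ]
      calc y 1 ≤ ∑ n ∈ Finset.range N, b n + A ^ N * y (N + 1) := ih
        _ ≤ ∑ n ∈ Finset.range N, b n + (A ^ N * (2 * f N * g N) + A ^ (N+1) * y (N+2)) := by
            rw [pow_succ]
            nlinarith
        _ = ∑ n ∈ Finset.range N, b n + b N + A ^ (N+1) * y ((N+1) + 1) := by
            simp only [hb]; ring
  have hy1 : y 1 ≤ ∑' n, b n := by
    have hlim1 : Tendsto (fun N => ∑ n ∈ Finset.range N, b n) atTop (nhds (∑' n, b n)) :=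
      hbsum.hasSum.tendsto_sum_nat
    have hlim2 : Tendsto (fun N => A ^ N * y (N + 1)) atTop (nhds 0) := by
      apply squeeze_zero (fun N => mul_nonneg (pow_nonneg hA0.le N) (hynn _)) (fun N => ?_)
        (by simpa using (tendsto_pow_atTop_nhds_zero_of_lt_one hA0.le hA1).mul_const C)
      exact mul_le_mul_of_nonneg_left (hC _) (pow_nonneg hA0.le N)
    have := hlim1.add hlim2
    rw [add_zero] at this
    exact le_of_tendsto_of_tendsto tendsto_const_nhds this
      (Filter.Eventually.of_forall key)
  -- now the double sum identity
  set F : ℕ × ℕ → ℝ := fun p => A ^ (p.1 + p.2) * (f p.1 * f (p.1 + p.2)) with hF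
  have hFnn : ∀ p, 0 ≤ F p := by
    intro p
    exact mul_nonneg (pow_nonneg hA0.le _)
      (mul_nonneg (hf0 p.1).le (hf0 (p.1 + p.2)).le)
  have hFrow : ∀ n : ℕ, Summable (fun j => F (n, j)) := by
    intro n
    have : (fun j => F (n, j)) = fun j => (A ^ n * f n) * (A ^ j * f (n + j)) := by
      funext j
      simp only [hF, pow_add]
      ring
    rw [this]
    exact (hsumtail n).mul_left _
  have hFrowsum : ∀ n : ℕ, (∑' j, F (n, j)) = A ^ n * f n * g n := by
    intro n
    have : (fun j => F (n, j)) = fun j => (A ^ n * f n) * (A ^ j * f (n + j)) := by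
      funext j
      simp only [hF, pow_add]
      ring
    rw [this, tsum_mul_left]
  have hFsum : Summable F := by
    rw [summable_prod_of_nonneg hFnn]
    constructor
    · exact hFrow
    · apply Summable.of_nonneg_of_le (fun n => tsum_nonneg (fun j => hFnn _)) (fun n => ?_)
        (hgeo.mul_right (1-A)⁻¹)
      rw [hFrowsum n]
      have h1 := hf1 n
      have h2 := hf0 n
      have h3 := hgle n
      have h4 := hgnn n
      have hpow : (0:ℝ) ≤ A ^ n := pow_nonneg hA0.le n
      nlinarith [mul_le_mul h1 h3 h4 zero_le_one]
  -- ∑ b = 2 * ∑ F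
  have hbF : ∑' n, b n = 2 * ∑' p, F p := by
    rw [Summable.tsum_prod' hFsum hFrow, ← tsum_mul_left]
    congr 1
    funext n
    rw [hFrowsum n]
    simp only [hb]
    ring
  -- reindex F via (n,j) ↦ (n+j, n)
  set G : ℕ × ℕ → ℝ := fun p => if p.2 ≤ p.1 then A ^ p.1 * (f p.2 * f p.1) else 0 with hG
  set e : ℕ × ℕ → ℕ × ℕ := fun p => (p.1 + p.2, p.1) with he
  have hei : Function.Injective e := by
    intro p q h
    simp only [he, Prod.mk.injEq] at h
    obtain ⟨h1, h2⟩ := h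
    have : p.2 = q.2 := by omega
    exact Prod.ext h2 this
  have hGe : ∀ p : ℕ × ℕ, G (e p) = F p := by
    intro p
    simp only [hG, he, hF]
    rw [if_pos (by omega)]
  have hGsupp : Function.support G ⊆ Set.range e := by
    intro p hp
    simp only [hG, Function.mem_support] at hp
    by_cases h : p.2 ≤ p.1
    · exact ⟨(p.2, p.1 - p.2), by simp only [he]; ext <;> simp <;> omega⟩
    · exact absurd (if_neg h) hp
  have hFG : ∑' p, F p = ∑' p, G p := by
    rw [← hei.tsum_eq hGsupp]
    congr 1
    funext p
    exact (hGe p).symm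
  have hGsum : Summable G := by
    rw [← (hei.summable_iff (by intro p hp; by_contra hne; exact hp (hGsupp hne)))]
    exact hFsum.congr (fun p => (hGe p).symm)
  have hGrow : ∀ k : ℕ, (∑' n, G (k, n)) = (A ^ k * f k) * ∑ n ∈ Finset.range (k+1), f n := by
    intro k
    have h1 : (∑' n : ℕ, G (k, n)) = ∑ n ∈ Finset.range (k+1), G (k, n) := by
      apply tsum_eq_sum
      intro n hn
      simp only [Finset.mem_range] at hn
      simp only [hG]
      rw [if_neg (by omega)]
    rw [h1, Finset.mul_sum]
    apply Finset.sum_congr rfl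
    intro n hn
    simp only [Finset.mem_range] at hn
    simp only [hG]
    rw [if_pos (by omega)]
    ring
  have hGtsum : ∑' p, G p = ∑' k, (A ^ k * f k) * ∑ n ∈ Finset.range (k+1), f n := by
    rw [Summable.tsum_prod' hGsum ?_]
    · exact tsum_congr hGrow
    · intro k
      apply (hGsum.comp_injective (i := fun n : ℕ => (k, n)) ?_)
      intro a b h
      simpa using h
  -- finish
  have hfinal : ∑' n, b n = 2 * ∑' k, (A ^ k * f k) * ∑ n ∈ Finset.range (k+1), f n := by
    rw [hbF, hFG, hGtsum]
  have hgoal : (2:ℝ) * ∑' n : ℕ, (A ^ n / (((n : ℝ) + 1) + s (n + 1))) *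
      ∑ k ∈ Finset.range (n + 1), 1 / (((k : ℝ) + 1) + s (k + 1))
      = 2 * ∑' k, (A ^ k * f k) * ∑ n ∈ Finset.range (k+1), f n := by
    congr 1
    apply tsum_congr
    intro n
    congr 1
    · simp only [hf]
      ring
  calc y 1 ≤ ∑' n, b n := hy1
    _ = 2 * ∑' k, (A ^ k * f k) * ∑ n ∈ Finset.range (k+1), f n := hfinal
    _ = _ := hgoal.symm
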